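/- Let 𝓔 be a trace-preserving Schwarz map on a unital C*-algebra A with faithful trace τ. Then the fixed point set Fix 𝓔 = {x : 𝓔(x) = x} is a unital C*-subalgebra of A; in particular, if x, y ∈ Fix 𝓔 then xy ∈ Fix 𝓔. -/

import Mathlib

open scoped ComplexOrder

section SchwarzAux

variable {A : Type*} [CStarAlgebra A] [PartialOrder A] [StarOrderedRing A]

private lemma schwarz_pos (E : A →ₗ[ℂ] A)
    (hSchwarz : ∀ x : A, star (E x) * E x ≤ E (star x * x)) :
    ∀ a : A, 0 ≤ a → 0 ≤ E a := by
  intro a ha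
  have h1 := hSchwarz (CFC.sqrt a)
  rw [(IsSelfAdjoint.of_nonneg (CFC.sqrt_nonneg a)).star_eq, CFC.sqrt_mul_sqrt_self a ha] at h1
  exact le_trans (star_mul_self_nonneg _) h1

private lemma pos_selfAdjoint (E : A →ₗ[ℂ] A)
    (hEpos : ∀ a : A, 0 ≤ a → 0 ≤ E a) {a : A} (ha : IsSelfAdjoint a) :
    IsSelfAdjoint (E a) := by
  have h : E a = E (a⁺) - E (a⁻) := by rw [← map_sub, CFC.posPart_sub_negPart a ha]
  rw [h]
  exact (IsSelfAdjoint.of_nonneg (hEpos _ (CFC.posPart_nonneg a))).sub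
    (IsSelfAdjoint.of_nonneg (hEpos _ (CFC.negPart_nonneg a)))

private lemma pos_star_map (E : A →ₗ[ℂ] A)
    (hEpos : ∀ a : A, 0 ≤ a → 0 ≤ E a) (x : A) :
    E (star x) = star (E x) := by
  have hre : IsSelfAdjoint (E (realPart x : A)) := pos_selfAdjoint E hEpos (realPart x).2
  have him : IsSelfAdjoint (E (imaginaryPart x : A)) := pos_selfAdjoint E hEpos (imaginaryPart x).2
  have hx := realPart_add_I_smul_imaginaryPart x
  calc E (star x)
      = E (star ((realPart x : A) + Complex.I • (imaginaryPart x : A))) := by rw [hx]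
    _ = E ((realPart x : A)) - Complex.I • E ((imaginaryPart x : A)) := by
        rw [star_add, (realPart x).2.star_eq, star_smul, (imaginaryPart x).2.star_eq]
        simp only [Complex.star_def, Complex.conj_I, map_add, map_neg, map_smul, neg_smul]
        rw [sub_eq_add_neg]
    _ = star (E x) := by
        conv_rhs => rw [← hx]
        rw [map_add, map_smul, star_add, star_smul, hre.star_eq, him.star_eq]
        simp only [Complex.star_def, Complex.conj_I, neg_smul]
        rw [sub_eq_add_neg]

private lemma expand_aux (a b : A) :
    star (a + b) * (a + b) = (star a * a + star b * b) + (star a * b + star b * a) := by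
  rw [star_add]
  noncomm_ring

end SchwarzAux

/-- the fixed point set of a trace-preserving Schwarz map on a unital
C*-algebra with faithful trace is a unital (norm-closed, star-closed) C*-subalgebra; in
particular it is closed under multiplication. -/
theorem fixed_points_form_cstar_subalgebra {A : Type*}
    [CStarAlgebra A] [PartialOrder A] [StarOrderedRing A]
    (τ : A →ₗ[ℂ] ℂ)
    (hpos : ∀ a : A, 0 ≤ a → 0 ≤ τ a)
    (hfaith : ∀ a : A, 0 ≤ a → τ a = 0 → a = 0)
    (htracial : ∀ x y : A, τ (x * y) = τ (y * x))
    (E : A →ₗ[ℂ] A)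
    (hEtrace : ∀ x : A, τ (E x) = τ x)
    (hSchwarz : ∀ x : A, star (E x) * E x ≤ E (star x * x)) :
    E 1 = 1 ∧
    IsClosed {x : A | E x = x} ∧
    (∀ x : A, E x = x → E (star x) = star x) ∧
    (∀ x y : A, E x = x → E y = y → E (x * y) = x * y) := by
  have hEpos : ∀ a : A, 0 ≤ a → 0 ≤ E a := schwarz_pos E hSchwarz
  have hmonoτ : ∀ p q : A, p ≤ q → τ p ≤ τ q := by
    intro p q h
    have h2 := hpos _ (sub_nonneg.2 h)
    rw [map_sub] at h2
    exact sub_nonneg.1 h2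
  have hmonoE : ∀ p q : A, p ≤ q → E p ≤ E q := by
    intro p q h
    have h2 := hEpos _ (sub_nonneg.2 h)
    rw [map_sub] at h2
    exact sub_nonneg.1 h2
  -- Step 1 : `E 1 = 1`
  have hE1 : E 1 = 1 := by
    have h1 := hSchwarz 1
    rw [star_one, one_mul] at h1
    have hd0 : 0 ≤ E 1 := le_trans (star_mul_self_nonneg _) h1
    have hdsa : IsSelfAdjoint (E 1) := IsSelfAdjoint.of_nonneg hd0
    rw [hdsa.star_eq] at h1
    set c : A := 1 - E 1 with hc
    have hcc : star c * c = 1 - E 1 - E 1 + E 1 * E 1 := by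
      rw [hc, star_sub, star_one, hdsa.star_eq]
      noncomm_ring
    have hτcc : τ (star c * c) = τ (E 1 * E 1) - τ 1 := by
      rw [hcc, map_add, map_sub, map_sub, hEtrace 1]
      ring
    have hle : τ (star c * c) ≤ 0 := by
      rw [hτcc]
      have h2 := hmonoτ _ _ h1
      rw [hEtrace 1] at h2
      exact sub_nonpos.2 h2
    have hge : 0 ≤ τ (star c * c) := hpos _ (star_mul_self_nonneg c)
    have hzero : τ (star c * c) = 0 := le_antisymm hle hge
    have hc0 : c = 0 :=
      (CStarRing.star_mul_self_eq_zero_iff c).mp (hfaith _ (star_mul_self_nonneg c) hzero)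
    rw [hc] at hc0
    exact (sub_eq_zero.mp hc0).symm
  -- Step 2 : norm bound and continuity
  have hsa_bound : ∀ a : A, IsSelfAdjoint a → ‖E a‖ ≤ 3 * ‖a‖ := by
    intro a ha
    rcases subsingleton_or_nontrivial A with hS | hN
    · have hz : E a = 0 := Subsingleton.elim _ _
      rw [hz, norm_zero]
      positivity
    have hnorm1 : ‖(‖a‖ • (1 : A))‖ = ‖a‖ := by
      rw [norm_smul, norm_one, mul_one, Real.norm_of_nonneg (norm_nonneg a)]
    have h1 : E a ≤ ‖a‖ • (1 : A) := by
      have h := hmonoE a (algebraMap ℝ A ‖a‖) ha.le_algebraMap_norm_self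
      rwa [Algebra.algebraMap_eq_smul_one, E.map_smul_of_tower, hE1] at h
    have h2 : -(‖a‖ • (1 : A)) ≤ E a := by
      have h := hmonoE (-(algebraMap ℝ A ‖a‖)) a ha.neg_algebraMap_norm_le_self
      rwa [Algebra.algebraMap_eq_smul_one, map_neg, E.map_smul_of_tower, hE1] at h
    have h0 : 0 ≤ E a + ‖a‖ • (1 : A) := by
      have h := add_le_add_left h2 (‖a‖ • (1 : A))
      simpa using h
    have hle2 : E a + ‖a‖ • (1 : A) ≤ ‖a‖ • (1 : A) + ‖a‖ • (1 : A) :=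
      add_le_add_left h1 _
    have hn := CStarAlgebra.norm_le_norm_of_nonneg_of_le h0 hle2
    have hn2 : ‖(‖a‖ • (1 : A)) + ‖a‖ • (1 : A)‖ ≤ 2 * ‖a‖ := by
      have := norm_add_le (‖a‖ • (1 : A)) (‖a‖ • (1 : A))
      rw [hnorm1] at this
      linarith
    calc ‖E a‖ = ‖(E a + ‖a‖ • (1 : A)) - ‖a‖ • (1 : A)‖ := by rw [add_sub_cancel_right]
      _ ≤ ‖E a + ‖a‖ • (1 : A)‖ + ‖(‖a‖ • (1 : A))‖ := norm_sub_le _ _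
      _ ≤ 2 * ‖a‖ + ‖a‖ := by
          rw [hnorm1]
          exact add_le_add_left (le_trans hn hn2) _
      _ = 3 * ‖a‖ := by ring
  have hbound : ∀ x : A, ‖E x‖ ≤ 6 * ‖x‖ := by
    intro x
    have hre : ‖(realPart x : A)‖ ≤ ‖x‖ := by
      rw [realPart_apply_coe]
      have h : ‖x + star x‖ ≤ 2 * ‖x‖ := by
        have := norm_add_le x (star x)
        rw [norm_star] at this
        linarith
      rw [norm_smul, Real.norm_eq_abs, abs_inv]
      have : |(2 : ℝ)| = 2 := by norm_num
      rw [this]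
      linarith
    have him : ‖(imaginaryPart x : A)‖ ≤ ‖x‖ := by
      rw [imaginaryPart_apply_coe]
      have h : ‖x - star x‖ ≤ 2 * ‖x‖ := by
        have := norm_sub_le x (star x)
        rw [norm_star] at this
        linarith
      rw [norm_smul, norm_neg, Complex.norm_I, one_mul, norm_smul, Real.norm_eq_abs, abs_inv]
      have : |(2 : ℝ)| = 2 := by norm_num
      rw [this]
      linarith
    have hre2 : ‖E ((realPart x : A))‖ ≤ 3 * ‖x‖ :=
      le_trans (hsa_bound _ (realPart x).2) (by linarith)
    have him2 : ‖E ((imaginaryPart x : A))‖ ≤ 3 * ‖x‖ :=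
      le_trans (hsa_bound _ (imaginaryPart x).2) (by linarith)
    calc ‖E x‖ = ‖E ((realPart x : A)) + Complex.I • E ((imaginaryPart x : A))‖ := by
          conv_lhs => rw [← realPart_add_I_smul_imaginaryPart x]
          rw [map_add, map_smul]
      _ ≤ ‖E ((realPart x : A))‖ + ‖Complex.I • E ((imaginaryPart x : A))‖ := norm_add_le _ _
      _ = ‖E ((realPart x : A))‖ + ‖E ((imaginaryPart x : A))‖ := by
          rw [norm_smul, Complex.norm_I, one_mul]
      _ ≤ 6 * ‖x‖ := by linarith
  have hcont : Continuous E := AddMonoidHomClass.continuous_of_bound E 6 hbound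
  have hclosed : IsClosed {x : A | E x = x} := isClosed_eq hcont continuous_id
  -- Step 3 : star-closedness
  have hstarfix : ∀ x : A, E x = x → E (star x) = star x := by
    intro x hx
    rw [pos_star_map E hEpos, hx]
  -- Step 4 : equality in the Schwarz inequality at fixed points
  have key : ∀ v : A, E v = v → E (star v * v) = star v * v := by
    intro v hv
    have h0 : 0 ≤ E (star v * v) - star v * v := by
      have h := hSchwarz v
      rw [hv] at h
      exact sub_nonneg.2 h
    have hτ : τ (E (star v * v) - star v * v) = 0 := by
      rw [map_sub, hEtrace]
      ring
    exact sub_eq_zero.mp (hfaith _ h0 hτ)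
  -- Step 5 : multiplicativity on fixed points
  refine ⟨hE1, hclosed, hstarfix, ?_⟩
  intro x y hx hy
  have hx' : E (star x) = star x := hstarfix x hx
  have hy' : E (star y) = star y := hstarfix y hy
  have kxx : E (x * star x) = x * star x := by
    have := key (star x) hx'
    rwa [star_star] at this
  have kyy : E (star y * y) = star y * y := key y hy
  -- first fixed point : star x + y
  have hu1 : E (star x + y) = star x + y := by rw [map_add, hx', hy]
  have k1 := key _ hu1
  rw [expand_aux (star x) y, star_star] at k1
  rw [map_add, map_add, kxx, kyy] at k1
  have e1 : E (x * y) + E (star y * star x) = x * y + star y * star x := by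
    have := add_left_cancel k1
    rwa [map_add] at this
  -- second fixed point : star x + I • y
  have hu2 : E (star x + Complex.I • y) = star x + Complex.I • y := by
    rw [map_add, map_smul, hx', hy]
  have k2 := key _ hu2
  rw [expand_aux (star x) (Complex.I • y), star_star] at k2
  have sb : star (Complex.I • y) * (Complex.I • y) = star y * y := by
    rw [star_smul, Complex.star_def, Complex.conj_I, neg_smul, neg_mul, smul_mul_assoc,
      mul_smul_comm, smul_smul, Complex.I_mul_I]
    simp
  have sab : x * (Complex.I • y) = Complex.I • (x * y) := mul_smul_comm _ _ _
  have sba : star (Complex.I • y) * star x = -(Complex.I • (star y * star x)) := by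
    rw [star_smul, Complex.star_def, Complex.conj_I, neg_smul, neg_mul, smul_mul_assoc]
  rw [sb, sab, sba] at k2
  rw [map_add, map_add, kxx, kyy] at k2
  have e2 : Complex.I • E (x * y) + -(Complex.I • E (star y * star x))
      = Complex.I • (x * y) + -(Complex.I • (star y * star x)) := by
    have := add_left_cancel k2
    rwa [map_add, map_neg, map_smul, map_smul] at this
  -- combine
  have h3 : (2 * Complex.I) • E (x * y) = (2 * Complex.I) • (x * y) := by
    calc (2 * Complex.I) • E (x * y)
        = Complex.I • (E (x * y) + E (star y * star x))
          + (Complex.I • E (x * y) + -(Complex.I • E (star y * star x))) := by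
          rw [two_mul, add_smul, smul_add]
          abel
      _ = Complex.I • (x * y + star y * star x)
          + (Complex.I • (x * y) + -(Complex.I • (star y * star x))) := by rw [e1, e2]
      _ = (2 * Complex.I) • (x * y) := by
          rw [two_mul, add_smul, smul_add]
          abel
  have h2I : (2 * Complex.I : ℂ) ≠ 0 := by
    simp [Complex.I_ne_zero]
  exact smul_right_injective A h2I h3
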